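/- Let 𝒳 be a finite set, C : 𝒳×𝒳 → [0,∞) symmetric and not identically zero, and ω a probability measure on 𝒳. Then the function I_ω(ϖ) = (1/2)·𝔥_C(ϖ‖ω), defined on the space of finite symmetric measures ϖ on 𝒳×𝒳 (identified with the nonnegative symmetric vectors in ℝ^{𝒳×𝒳} with the Euclidean topology) and taking values in [0,∞], is lower semicontinuous and has compact sublevel sets: for every α < ∞ the set {ϖ : I_ω(ϖ) ≤ α} is compact. -/

import Mathlib

open Filter Topology

namespace ColoredLDP

noncomputable section

/-- Extended logarithm: `⊥` at nonpositive arguments. -/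
def elog (x : ℝ) : EReal := if x ≤ 0 then (⊥ : EReal) else ((Real.log x : ℝ) : EReal)

open Classical in
/-- Relative entropy of finite measures on a finite set, with value `⊤` if
absolute continuity fails. -/
def relEntFin {Y : Type} [Fintype Y] (ν ρ : Y → ℝ) : EReal :=
  if ∀ y, ρ y = 0 → ν y = 0 then (((∑ y, ν y * Real.log (ν y / ρ y)) : ℝ) : EReal)
  else (⊤ : EReal)

open Classical in
/-- Relative entropy of measures on a countable set, with value `⊤` if absolute
continuity fails or the defining series is not (absolutely) summable. -/
def relEntC {Y : Type} (ν ρ : Y → ℝ) : EReal :=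
  if (∀ y, ρ y = 0 → ν y = 0) ∧ Summable (fun y => ν y * Real.log (ν y / ρ y)) then
    (((∑' y, ν y * Real.log (ν y / ρ y)) : ℝ) : EReal)
  else (⊤ : EReal)

variable {𝒳 : Type} [Fintype 𝒳] [DecidableEq 𝒳]

/-- `𝔥_C(ϖ‖ω) = H(ϖ‖Cω⊗ω) + ‖Cω⊗ω‖ − ‖ϖ‖`. -/
def hC (C : 𝒳 → 𝒳 → ℝ) (ϖ : 𝒳 → 𝒳 → ℝ) (ω : 𝒳 → ℝ) : EReal :=
  relEntFin (fun q : 𝒳 × 𝒳 => ϖ q.1 q.2) (fun q : 𝒳 × 𝒳 => C q.1 q.2 * ω q.1 * ω q.2)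
    + (((∑ a, ∑ b, C a b * ω a * ω b) : ℝ) : EReal) - (((∑ a, ∑ b, ϖ a b) : ℝ) : EReal)

/-- A probability mass function. -/
def IsPMF {Y : Type} (ν : Y → ℝ) : Prop := (∀ y, 0 ≤ ν y) ∧ HasSum ν 1

/-- The `𝒳`-marginal `ν₁` of a measure on `𝒳 × ℕ^𝒳`. -/
def marg (ν : 𝒳 × (𝒳 → ℕ) → ℝ) (a : 𝒳) : ℝ := ∑' ℓ : 𝒳 → ℕ, ν (a, ℓ)

/-- The measure `⟨ν(·,ℓ), ℓ(·)⟩`, the second component of `Φ(ν)`. -/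
def pairOf (ν : 𝒳 × (𝒳 → ℕ) → ℝ) (a b : 𝒳) : ℝ := ∑' ℓ : 𝒳 → ℕ, ν (a, ℓ) * (ℓ b : ℝ)

/-- Sub-consistency of a pair `(ϖ, ν)`. -/
def SubConsistent (ϖ : 𝒳 → 𝒳 → ℝ) (ν : 𝒳 × (𝒳 → ℕ) → ℝ) : Prop :=
  ∀ a b : 𝒳, (∑' ℓ : 𝒳 → ℕ, ENNReal.ofReal (ν (a, ℓ) * (ℓ b : ℝ))) ≤ ENNReal.ofReal (ϖ a b)

/-- The measure with colour law `ω` under which the neighbourhood counts are independent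
Poisson variables with means `ϖ(a,b)/ω(a)`; `Q[ϖ,ν]` is `Qof ϖ ν₁`. -/
def Qof (ϖ : 𝒳 → 𝒳 → ℝ) (ω : 𝒳 → ℝ) (x : 𝒳 × (𝒳 → ℕ)) : ℝ :=
  ω x.1 * ∏ b : 𝒳,
    Real.exp (-(ϖ x.1 b / ω x.1)) * (ϖ x.1 b / ω x.1) ^ (x.2 b) / (Nat.factorial (x.2 b) : ℝ)

/-- The set of possible (ordered) edges on `n` vertices. -/
abbrev Edge (n : ℕ) := {e : Fin n × Fin n // e.1 < e.2}

/-- A coloured graph on `n` vertices: a colouring together with an edge set. -/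
abbrev Config (𝒳 : Type) (n : ℕ) := (Fin n → 𝒳) × Finset (Edge n)

/-- The probability weight of a configuration under the coloured random graph law. -/
def wt {n : ℕ} (μ : 𝒳 → ℝ) (p : 𝒳 → 𝒳 → ℝ) (x : Config 𝒳 n) : ℝ :=
  (∏ v, μ (x.1 v)) *
    ∏ e : Edge n,
      if e ∈ x.2 then p (x.1 e.1.1) (x.1 e.1.2) else 1 - p (x.1 e.1.1) (x.1 e.1.2)

/-- The law of the coloured random graph, evaluated on an event. -/
def graphP (𝒳 : Type) [Fintype 𝒳] [DecidableEq 𝒳] (n : ℕ) (μ : 𝒳 → ℝ) (p : 𝒳 → 𝒳 → ℝ)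
    (A : Set (Config 𝒳 n)) : ℝ :=
  ∑ x : Config 𝒳 n, A.indicator (wt μ p) x

/-- Conditional probability for the coloured random graph. -/
def condP (𝒳 : Type) [Fintype 𝒳] [DecidableEq 𝒳] (n : ℕ) (μ : 𝒳 → ℝ) (p : 𝒳 → 𝒳 → ℝ)
    (A B : Set (Config 𝒳 n)) : ℝ :=
  graphP 𝒳 n μ p (A ∩ B) / graphP 𝒳 n μ p B

/-- Conditional expectation for the coloured random graph. -/
def condE (𝒳 : Type) [Fintype 𝒳] [DecidableEq 𝒳] (n : ℕ) (μ : 𝒳 → ℝ) (p : 𝒳 → 𝒳 → ℝ)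
    (f : Config 𝒳 n → ℝ) (B : Set (Config 𝒳 n)) : ℝ :=
  (∑ x : Config 𝒳 n, B.indicator (fun x => wt μ p x * f x) x) / graphP 𝒳 n μ p B

/-- The empirical colour measure `L¹`. -/
def empColor {n : ℕ} (x : Config 𝒳 n) (a : 𝒳) : ℝ :=
  ((Finset.univ.filter (fun v : Fin n => x.1 v = a)).card : ℝ) / n

/-- The empirical pair measure `L²`. -/
def empPair {n : ℕ} (x : Config 𝒳 n) (a b : 𝒳) : ℝ :=
  (∑ e ∈ x.2, ((if x.1 e.1.1 = a ∧ x.1 e.1.2 = b then (1:ℝ) else 0) +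
    (if x.1 e.1.2 = a ∧ x.1 e.1.1 = b then (1:ℝ) else 0))) / n

/-- The number of neighbours of `v` of colour `b`. -/
def locDeg {n : ℕ} (x : Config 𝒳 n) (v : Fin n) (b : 𝒳) : ℕ :=
  (x.2.filter (fun e => (e.1.1 = v ∧ x.1 e.1.2 = b) ∨ (e.1.2 = v ∧ x.1 e.1.1 = b))).card

/-- The empirical neighbourhood measure `M`. -/
def empNbhd {n : ℕ} (x : Config 𝒳 n) (y : 𝒳 × (𝒳 → ℕ)) : ℝ :=
  ((Finset.univ.filter (fun v : Fin n =>
      x.1 v = y.1 ∧ (fun b => locDeg x v b) = y.2)).card : ℝ) / n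

/-- Total variation distance between measures on `𝒳 × ℕ^𝒳`. -/
def dTV (ν ν' : 𝒳 × (𝒳 → ℕ) → ℝ) : ℝ := (1 / 2) * ∑' y, |ν y - ν' y|

end
end ColoredLDP

namespace ColoredLDP

open scoped ENNReal NNReal

noncomputable section Aux

/-- Pointwise entropy term as an extended nonneg real. -/
noncomputable def phi (r x : ℝ) : ℝ≥0∞ :=
  if r = 0 then (if x = 0 then 0 else ⊤)
  else ENNReal.ofReal (x * Real.log (x / r) + r - x)

lemma phi_lsc (r : ℝ) : LowerSemicontinuous (phi r) := by
  by_cases hr : r = 0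
  · intro x c hc
    simp only [phi, hr, if_true] at hc ⊢
    by_cases hx : x = 0
    · rw [if_pos hx] at hc
      exact absurd hc (by simp)
    · rw [if_neg hx] at hc
      filter_upwards [IsOpen.eventually_mem isOpen_ne hx] with y hy
      rw [if_neg hy]
      exact hc
  · have h1 : (fun x : ℝ => x * Real.log (x / r) + r - x)
        = fun x => (x * Real.log x - x * Real.log r) + r - x := by
      funext x
      by_cases hx : x = 0
      · simp [hx]
      · rw [Real.log_div hx hr]; ring
    have hc2 : Continuous fun x : ℝ => (x * Real.log x - x * Real.log r) + r - x :=
      ((Real.continuous_mul_log.sub (continuous_id.mul continuous_const)).add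
        continuous_const).sub continuous_id
    have : phi r = fun x => ENNReal.ofReal ((x * Real.log x - x * Real.log r) + r - x) := by
      funext x
      simp only [phi, if_neg hr]
      rw [congrFun h1 x]
    rw [this]
    exact (ENNReal.continuous_ofReal.comp hc2).lowerSemicontinuous

lemma term_nonneg {r x : ℝ} (hx : 0 ≤ x) (hr : 0 ≤ r) (hac : r = 0 → x = 0) :
    0 ≤ x * Real.log (x / r) + r - x := by
  rcases eq_or_lt_of_le hx with h0 | hxpos
  · rw [← h0]; simpa using hr
  rcases eq_or_lt_of_le hr with hr0 | hrpos
  · exact absurd (hac hr0.symm) hxpos.ne'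
  have hlog : Real.log (r / x) ≤ r / x - 1 := Real.log_le_sub_one_of_pos (div_pos hrpos hxpos)
  have h2 : x * Real.log (r / x) ≤ r - x := by
    have h3 := mul_le_mul_of_nonneg_left hlog hx
    have h4 : x * (r / x - 1) = r - x := by field_simp
    linarith [h3, h4.le, h4.ge]
  have hlogswap : Real.log (r / x) = -Real.log (x / r) := by
    rw [← Real.log_inv]
    congr 1
    rw [inv_div]
  rw [hlogswap, mul_neg] at h2
  linarith

lemma term_coercive {r x M : ℝ} (hx : 0 ≤ x) (hr : 0 ≤ r) (hac : r = 0 → x = 0) (hM : 0 ≤ M)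
    (h : x * Real.log (x / r) + r - x ≤ M) : x ≤ r * Real.exp 2 + M := by
  rcases eq_or_lt_of_le hr with hr0 | hrpos
  · rw [hac hr0.symm]; positivity
  by_cases hbig : x ≤ r * Real.exp 2
  · linarith
  push_neg at hbig
  have hxpos : 0 < x := lt_trans (by positivity) hbig
  have hlog2 : (2 : ℝ) ≤ Real.log (x / r) := by
    have hle : Real.exp 2 ≤ x / r := by
      rw [le_div_iff₀ hrpos]; nlinarith [hbig]
    calc (2 : ℝ) = Real.log (Real.exp 2) := (Real.log_exp 2).symm
      _ ≤ Real.log (x / r) := Real.log_le_log (Real.exp_pos 2) hle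
  have h2x : x * 2 ≤ x * Real.log (x / r) := mul_le_mul_of_nonneg_left hlog2 hx
  have : 0 ≤ r * Real.exp 2 := by positivity
  linarith

lemma ennreal_le_ofReal_of_ereal_le {x : ℝ≥0∞} {b : ℝ} (hb : 0 ≤ b)
    (h : (x : EReal) ≤ (b : ℝ)) : x ≤ ENNReal.ofReal b := by
  by_cases hx : x = ⊤
  · rw [hx, EReal.coe_ennreal_top] at h
    exact absurd h (not_le.2 (EReal.coe_lt_top b))
  · lift x to ℝ≥0 using hx
    rw [EReal.coe_nnreal_eq_coe_real, EReal.coe_le_coe_iff] at h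
    rw [ENNReal.le_ofReal_iff_toReal_le (by simp) hb]
    simpa using h

variable {𝒳 : Type} [Fintype 𝒳] [DecidableEq 𝒳]

lemma key_eq (C : 𝒳 → 𝒳 → ℝ) (ω : 𝒳 → ℝ)
    (hρ : ∀ q : 𝒳 × 𝒳, 0 ≤ C q.1 q.2 * ω q.1 * ω q.2)
    (ϖ : 𝒳 → 𝒳 → ℝ) (hϖ : ∀ a b, 0 ≤ ϖ a b) :
    (((1 : ℝ) / 2 : ℝ) : EReal) * hC C ϖ ω =
      (((2 : ℝ≥0∞)⁻¹ * ∑ q : 𝒳 × 𝒳, phi (C q.1 q.2 * ω q.1 * ω q.2) (ϖ q.1 q.2) : ℝ≥0∞) :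
        EReal) := by
  classical
  have hsum2 : (∑ a, ∑ b, C a b * ω a * ω b)
      = ∑ q : 𝒳 × 𝒳, C q.1 q.2 * ω q.1 * ω q.2 :=
    (Fintype.sum_prod_type (f := fun q : 𝒳 × 𝒳 => C q.1 q.2 * ω q.1 * ω q.2)).symm
  have hsum3 : (∑ a, ∑ b, ϖ a b) = ∑ q : 𝒳 × 𝒳, ϖ q.1 q.2 :=
    (Fintype.sum_prod_type (f := fun q : 𝒳 × 𝒳 => ϖ q.1 q.2)).symm
  by_cases hAC : ∀ q : 𝒳 × 𝒳, C q.1 q.2 * ω q.1 * ω q.2 = 0 → ϖ q.1 q.2 = 0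
  · have hterm : ∀ q : 𝒳 × 𝒳, 0 ≤ ϖ q.1 q.2 *
        Real.log (ϖ q.1 q.2 / (C q.1 q.2 * ω q.1 * ω q.2))
        + C q.1 q.2 * ω q.1 * ω q.2 - ϖ q.1 q.2 :=
      fun q => term_nonneg (hϖ _ _) (hρ q) (hAC q)
    have hphi : ∀ q : 𝒳 × 𝒳, phi (C q.1 q.2 * ω q.1 * ω q.2) (ϖ q.1 q.2)
        = ENNReal.ofReal (ϖ q.1 q.2 *
            Real.log (ϖ q.1 q.2 / (C q.1 q.2 * ω q.1 * ω q.2))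
            + C q.1 q.2 * ω q.1 * ω q.2 - ϖ q.1 q.2) := by
      intro q
      by_cases hr : C q.1 q.2 * ω q.1 * ω q.2 = 0
      · have hx := hAC q hr
        simp [phi, hr, hx]
      · simp [phi, hr]
    have hT0 : 0 ≤ ∑ q : 𝒳 × 𝒳, (ϖ q.1 q.2 *
        Real.log (ϖ q.1 q.2 / (C q.1 q.2 * ω q.1 * ω q.2))
        + C q.1 q.2 * ω q.1 * ω q.2 - ϖ q.1 q.2) :=
      Finset.sum_nonneg fun q _ => hterm q
    have hsumphi : (∑ q : 𝒳 × 𝒳, phi (C q.1 q.2 * ω q.1 * ω q.2) (ϖ q.1 q.2))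
        = ENNReal.ofReal (∑ q : 𝒳 × 𝒳, (ϖ q.1 q.2 *
            Real.log (ϖ q.1 q.2 / (C q.1 q.2 * ω q.1 * ω q.2))
            + C q.1 q.2 * ω q.1 * ω q.2 - ϖ q.1 q.2)) := by
      rw [ENNReal.ofReal_sum_of_nonneg fun q _ => hterm q]
      exact Finset.sum_congr rfl fun q _ => hphi q
    have hhalf : (2 : ℝ≥0∞)⁻¹ = ENNReal.ofReal (1 / 2) := by
      rw [ENNReal.ofReal_div_of_pos (by norm_num), ENNReal.ofReal_one,
        ENNReal.ofReal_ofNat, one_div]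
    have hLHS : hC C ϖ ω = (((∑ q : 𝒳 × 𝒳, ϖ q.1 q.2 *
        Real.log (ϖ q.1 q.2 / (C q.1 q.2 * ω q.1 * ω q.2)))
        + (∑ q : 𝒳 × 𝒳, C q.1 q.2 * ω q.1 * ω q.2)
        - (∑ q : 𝒳 × 𝒳, ϖ q.1 q.2) : ℝ) : EReal) := by
      simp only [hC, relEntFin]
      rw [if_pos hAC, hsum2, hsum3, ← EReal.coe_add, ← EReal.coe_sub]
    have hTsum : (∑ q : 𝒳 × 𝒳, (ϖ q.1 q.2 *
        Real.log (ϖ q.1 q.2 / (C q.1 q.2 * ω q.1 * ω q.2))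
        + C q.1 q.2 * ω q.1 * ω q.2 - ϖ q.1 q.2))
        = (∑ q : 𝒳 × 𝒳, ϖ q.1 q.2 *
            Real.log (ϖ q.1 q.2 / (C q.1 q.2 * ω q.1 * ω q.2)))
          + (∑ q : 𝒳 × 𝒳, C q.1 q.2 * ω q.1 * ω q.2)
          - (∑ q : 𝒳 × 𝒳, ϖ q.1 q.2) := by
      rw [Finset.sum_sub_distrib, Finset.sum_add_distrib]
    have hS0 : (0:ℝ) ≤ (∑ q : 𝒳 × 𝒳, ϖ q.1 q.2 *
        Real.log (ϖ q.1 q.2 / (C q.1 q.2 * ω q.1 * ω q.2)))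
        + (∑ q : 𝒳 × 𝒳, C q.1 q.2 * ω q.1 * ω q.2)
        - (∑ q : 𝒳 × 𝒳, ϖ q.1 q.2) := hTsum ▸ hT0
    rw [hLHS, hsumphi, hhalf, ← ENNReal.ofReal_mul (by norm_num), ← EReal.coe_mul,
      EReal.coe_ennreal_ofReal, hTsum]
    exact (max_eq_left (EReal.coe_nonneg.2
      (mul_nonneg (by norm_num) hS0))).symm
  · push_neg at hAC
    obtain ⟨q0, hq0, hq0'⟩ := hAC
    have hphiT : phi (C q0.1 q0.2 * ω q0.1 * ω q0.2) (ϖ q0.1 q0.2) = ⊤ := by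
      simp [phi, hq0, hq0']
    have hsumT : (∑ q : 𝒳 × 𝒳, phi (C q.1 q.2 * ω q.1 * ω q.2) (ϖ q.1 q.2)) = ⊤ :=
      ENNReal.sum_eq_top.2 ⟨q0, Finset.mem_univ _, hphiT⟩
    have hLHS : hC C ϖ ω = ⊤ := by
      simp only [hC, relEntFin]
      rw [if_neg (by push_neg; exact ⟨q0, hq0, hq0'⟩), EReal.top_add_coe,
        EReal.top_sub_coe]
    rw [hLHS, hsumT, ENNReal.mul_top (by norm_num), EReal.coe_ennreal_top,
      EReal.mul_top_of_pos (EReal.coe_pos.2 (by norm_num))]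

end Aux

/-- Lemma 3.2(ii): `I_ω = (1/2)𝔥_C(·‖ω)` is a good rate function on the space of
finite symmetric measures on `𝒳 × 𝒳`. -/
theorem hC_good_rate (𝒳 : Type) [Fintype 𝒳] [DecidableEq 𝒳]
    (C : 𝒳 → 𝒳 → ℝ) (hC0 : ∀ a b, 0 ≤ C a b) (hCsym : ∀ a b, C a b = C b a)
    (hCne : ∃ a b, C a b ≠ 0)
    (ω : 𝒳 → ℝ) (hω0 : ∀ a, 0 ≤ ω a) (hω1 : ∑ a, ω a = 1) :
    LowerSemicontinuous
      (fun ϖ : {ϖ : 𝒳 → 𝒳 → ℝ // (∀ a b, 0 ≤ ϖ a b) ∧ ∀ a b, ϖ a b = ϖ b a} =>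
        (((1 : ℝ) / 2 : ℝ) : EReal) * hC C ϖ.1 ω) ∧
    ∀ α : ℝ,
      IsCompact {ϖ : {ϖ : 𝒳 → 𝒳 → ℝ // (∀ a b, 0 ≤ ϖ a b) ∧ ∀ a b, ϖ a b = ϖ b a} |
        (((1 : ℝ) / 2 : ℝ) : EReal) * hC C ϖ.1 ω ≤ (α : EReal)} := by
  classical
  have hρ : ∀ q : 𝒳 × 𝒳, 0 ≤ C q.1 q.2 * ω q.1 * ω q.2 :=
    fun q => mul_nonneg (mul_nonneg (hC0 _ _) (hω0 _)) (hω0 _)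
  let F : {ϖ : 𝒳 → 𝒳 → ℝ // (∀ a b, 0 ≤ ϖ a b) ∧ ∀ a b, ϖ a b = ϖ b a} → ℝ≥0∞ :=
    fun ϖ => (2 : ℝ≥0∞)⁻¹ * ∑ q : 𝒳 × 𝒳, phi (C q.1 q.2 * ω q.1 * ω q.2) (ϖ.1 q.1 q.2)
  have hkey : ∀ ϖ : {ϖ : 𝒳 → 𝒳 → ℝ // (∀ a b, 0 ≤ ϖ a b) ∧ ∀ a b, ϖ a b = ϖ b a},
      (((1 : ℝ) / 2 : ℝ) : EReal) * hC C ϖ.1 ω = (F ϖ : EReal) :=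
    fun ϖ => key_eq C ω hρ ϖ.1 ϖ.2.1
  have hFlsc : LowerSemicontinuous F := by
    have hsum : LowerSemicontinuous
        (fun ϖ : {ϖ : 𝒳 → 𝒳 → ℝ // (∀ a b, 0 ≤ ϖ a b) ∧ ∀ a b, ϖ a b = ϖ b a} =>
          ∑ q : 𝒳 × 𝒳, phi (C q.1 q.2 * ω q.1 * ω q.2) (ϖ.1 q.1 q.2)) :=
      lowerSemicontinuous_sum fun q _ =>
        LowerSemicontinuous.comp (phi_lsc _)
          ((continuous_apply q.2).comp ((continuous_apply q.1).comp continuous_subtype_val))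
    exact Continuous.comp_lowerSemicontinuous
      (ENNReal.continuous_const_mul (by norm_num)) hsum
      (fun a b h => mul_le_mul_right h _)
  have hglsc : LowerSemicontinuous
      (fun ϖ : {ϖ : 𝒳 → 𝒳 → ℝ // (∀ a b, 0 ≤ ϖ a b) ∧ ∀ a b, ϖ a b = ϖ b a} =>
        ((F ϖ : ℝ≥0∞) : EReal)) :=
    continuous_coe_ennreal_ereal.comp_lowerSemicontinuous hFlsc
      fun a b h => EReal.coe_ennreal_le_coe_ennreal_iff.2 h
  have hfun : (fun ϖ : {ϖ : 𝒳 → 𝒳 → ℝ // (∀ a b, 0 ≤ ϖ a b) ∧ ∀ a b, ϖ a b = ϖ b a} =>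
      (((1 : ℝ) / 2 : ℝ) : EReal) * hC C ϖ.1 ω) = fun ϖ => ((F ϖ : ℝ≥0∞) : EReal) :=
    funext hkey
  constructor
  · rw [hfun]
    exact hglsc
  · intro α
    have hset : {ϖ : {ϖ : 𝒳 → 𝒳 → ℝ // (∀ a b, 0 ≤ ϖ a b) ∧ ∀ a b, ϖ a b = ϖ b a} |
          (((1 : ℝ) / 2 : ℝ) : EReal) * hC C ϖ.1 ω ≤ (α : EReal)}
        = {ϖ : {ϖ : 𝒳 → 𝒳 → ℝ // (∀ a b, 0 ≤ ϖ a b) ∧ ∀ a b, ϖ a b = ϖ b a} |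
          ((F ϖ : ℝ≥0∞) : EReal) ≤ (α : EReal)} := by
      ext ϖ
      simp only [Set.mem_setOf_eq, hkey ϖ]
    rw [hset]
    have hclosedS : IsClosed {ϖ : {ϖ : 𝒳 → 𝒳 → ℝ //
        (∀ a b, 0 ≤ ϖ a b) ∧ ∀ a b, ϖ a b = ϖ b a} |
          ((F ϖ : ℝ≥0∞) : EReal) ≤ (α : EReal)} :=
      hglsc.isClosed_preimage (α : EReal)
    set β := max α 0 with hβ
    have hβ0 : (0 : ℝ) ≤ β := le_max_right _ _
    set Rs := ∑ q : 𝒳 × 𝒳, C q.1 q.2 * ω q.1 * ω q.2 with hRsdef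
    have hRs0 : (0 : ℝ) ≤ Rs := Finset.sum_nonneg fun q _ => hρ q
    set K := Rs * Real.exp 2 + 2 * β with hKdef
    have hK0 : (0 : ℝ) ≤ K := by positivity
    have hbound : ∀ ϖ : {ϖ : 𝒳 → 𝒳 → ℝ // (∀ a b, 0 ≤ ϖ a b) ∧ ∀ a b, ϖ a b = ϖ b a},
        ((F ϖ : ℝ≥0∞) : EReal) ≤ (α : EReal) → ∀ a b, ϖ.1 a b ≤ K := by
      intro ϖ hϖle a b
      have h1 : (F ϖ : EReal) ≤ ((β : ℝ) : EReal) :=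
        le_trans hϖle (EReal.coe_le_coe_iff.2 (le_max_left _ _))
      have h2 : F ϖ ≤ ENNReal.ofReal β := ennreal_le_ofReal_of_ereal_le hβ0 h1
      have h3 : phi (C a b * ω a * ω b) (ϖ.1 a b)
          ≤ ∑ q : 𝒳 × 𝒳, phi (C q.1 q.2 * ω q.1 * ω q.2) (ϖ.1 q.1 q.2) :=
        Finset.single_le_sum (f := fun q : 𝒳 × 𝒳 =>
            phi (C q.1 q.2 * ω q.1 * ω q.2) (ϖ.1 q.1 q.2))
          (fun q _ => zero_le) (Finset.mem_univ ((a, b) : 𝒳 × 𝒳))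
      have h4 : (∑ q : 𝒳 × 𝒳, phi (C q.1 q.2 * ω q.1 * ω q.2) (ϖ.1 q.1 q.2))
          = 2 * F ϖ := by
        show _ = (2 : ℝ≥0∞) * ((2 : ℝ≥0∞)⁻¹ * _)
        rw [← mul_assoc, ENNReal.mul_inv_cancel (by norm_num) (by norm_num), one_mul]
      have h5 : phi (C a b * ω a * ω b) (ϖ.1 a b) ≤ ENNReal.ofReal (2 * β) := by
        calc phi (C a b * ω a * ω b) (ϖ.1 a b) ≤ 2 * F ϖ := h4 ▸ h3
          _ ≤ 2 * ENNReal.ofReal β := mul_le_mul_right h2 _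
          _ = ENNReal.ofReal (2 * β) := by
              rw [ENNReal.ofReal_mul (by norm_num : (0:ℝ) ≤ 2), ENNReal.ofReal_ofNat]
      by_cases hr : C a b * ω a * ω b = 0
      · have hx : ϖ.1 a b = 0 := by
          by_contra hx
          rw [show phi (C a b * ω a * ω b) (ϖ.1 a b) = ⊤ by simp [phi, hr, hx]] at h5
          exact absurd (top_le_iff.1 h5) ENNReal.ofReal_ne_top
        rw [hx]
        exact hK0
      · have hterm : ϖ.1 a b * Real.log (ϖ.1 a b / (C a b * ω a * ω b))
            + C a b * ω a * ω b - ϖ.1 a b ≤ 2 * β := by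
          rw [show phi (C a b * ω a * ω b) (ϖ.1 a b) = ENNReal.ofReal
            (ϖ.1 a b * Real.log (ϖ.1 a b / (C a b * ω a * ω b))
              + C a b * ω a * ω b - ϖ.1 a b) by simp [phi, hr]] at h5
          exact (ENNReal.ofReal_le_ofReal_iff (by positivity)).1 h5
        have hco := term_coercive (ϖ.2.1 a b) (hρ (a, b)) (fun h => absurd h hr)
          (by positivity) hterm
        have hrle : C a b * ω a * ω b ≤ Rs :=
          Finset.single_le_sum (f := fun q : 𝒳 × 𝒳 => C q.1 q.2 * ω q.1 * ω q.2)
            (fun q _ => hρ q) (Finset.mem_univ ((a, b) : 𝒳 × 𝒳))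
        have hmul := mul_le_mul_of_nonneg_right hrle (Real.exp_pos 2).le
        rw [hKdef]
        linarith
    have hA : IsClosed {ϖ : 𝒳 → 𝒳 → ℝ | (∀ a b, 0 ≤ ϖ a b) ∧ ∀ a b, ϖ a b = ϖ b a} := by
      have heq : {ϖ : 𝒳 → 𝒳 → ℝ | (∀ a b, 0 ≤ ϖ a b) ∧ ∀ a b, ϖ a b = ϖ b a}
          = (⋂ a, ⋂ b, {ϖ : 𝒳 → 𝒳 → ℝ | 0 ≤ ϖ a b})
            ∩ ⋂ a, ⋂ b, {ϖ : 𝒳 → 𝒳 → ℝ | ϖ a b = ϖ b a} := by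
        ext ϖ
        simp [Set.mem_iInter]
      rw [heq]
      refine IsClosed.inter ?_ ?_
      · exact isClosed_iInter fun a => isClosed_iInter fun b =>
          isClosed_le continuous_const ((continuous_apply b).comp (continuous_apply a))
      · exact isClosed_iInter fun a => isClosed_iInter fun b =>
          isClosed_eq ((continuous_apply b).comp (continuous_apply a))
            ((continuous_apply a).comp (continuous_apply b))
    rw [IsEmbedding.subtypeVal.isCompact_iff]
    have hbox : IsCompact (Set.univ.pi fun _ : 𝒳 =>
        Set.univ.pi fun _ : 𝒳 => Set.Icc (0 : ℝ) K) :=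
      isCompact_univ_pi fun _ => isCompact_univ_pi fun _ => isCompact_Icc
    apply hbox.of_isClosed_subset
    · exact hA.isClosedEmbedding_subtypeVal.isClosedMap _ hclosedS
    · rintro x ⟨ϖ, hmem, rfl⟩
      rw [Set.mem_univ_pi]
      intro a
      rw [Set.mem_univ_pi]
      intro b
      exact ⟨ϖ.2.1 a b, hbound ϖ hmem a b⟩


end ColoredLDP
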